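/- arXiv:2102.01771 — 7 statements merged into one kernel-verified Lean document; each statement's English description precedes it below -/
import Mathlib

section
/- If the pair of random variables (X,Y) is independent of Z, then the Gács–Körner maximal common function of X and (Y,Z) equals the maximal common function of X and Y; that is, mcf(X,(Y,Z)) = mcf(X,Y) (up to equivalence of common functions, i.e., they have equal entropy and each is a function of both arguments). -/
open Real Finset

/-- Probability that random variable `X` takes value `a`, under the distribution `p` on `Ω`. -/
noncomputable def pr {Ω α : Type*} [Fintype Ω] [DecidableEq α]
    (p : Ω → ℝ) (X : Ω → α) (a : α) : ℝ :=
  ∑ ω ∈ Finset.univ.filter (fun ω => X ω = a), p ω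

/-- Shannon entropy (natural log) of a random variable `X` on the finite space `Ω`. -/
noncomputable def ent {Ω α : Type*} [Fintype Ω] [DecidableEq α]
    (p : Ω → ℝ) (X : Ω → α) : ℝ :=
  ∑ a ∈ Finset.univ.image X, Real.negMulLog (pr p X a)

/-- Conditional entropy H(X | Y) = H(X,Y) - H(Y). -/
noncomputable def cent {Ω α β : Type*} [Fintype Ω] [DecidableEq α] [DecidableEq β]
    (p : Ω → ℝ) (X : Ω → α) (Y : Ω → β) : ℝ :=
  ent p (fun ω => (X ω, Y ω)) - ent p Y

/-- `p` is a probability distribution on `Ω`. -/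
def IsProb {Ω : Type*} [Fintype Ω] (p : Ω → ℝ) : Prop :=
  (∀ ω, 0 ≤ p ω) ∧ ∑ ω, p ω = 1

/-- Independence of two random variables under `p`. -/
def IndepRV {Ω α β : Type*} [Fintype Ω] [DecidableEq α] [DecidableEq β]
    (p : Ω → ℝ) (X : Ω → α) (Y : Ω → β) : Prop :=
  ∀ a b, pr p (fun ω => (X ω, Y ω)) (a, b) = pr p X a * pr p Y b

/-- `G` is a common function of `U` and `V`: H(G|U) = H(G|V) = 0. -/
def IsCF {Ω α β γ : Type*} [Fintype Ω] [DecidableEq α] [DecidableEq β] [DecidableEq γ]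
    (p : Ω → ℝ) (U : Ω → α) (V : Ω → β) (G : Ω → γ) : Prop :=
  cent p G U = 0 ∧ cent p G V = 0

/-- `G` is a maximal common function (Gács–Körner) of `U` and `V`:
a common function of maximal entropy among all common functions. -/
def IsMCF {Ω α β γ : Type*} [Fintype Ω] [DecidableEq α] [DecidableEq β] [DecidableEq γ]
    (p : Ω → ℝ) (U : Ω → α) (V : Ω → β) (G : Ω → γ) : Prop :=
  IsCF p U V G ∧ ∀ G' : Ω → ℕ, IsCF p U V G' → ent p G' ≤ ent p G

section Aux
variable {Ω : Type*} [Fintype Ω]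

lemma pr_nonneg {α : Type*} [DecidableEq α] {p : Ω → ℝ} (hp : ∀ ω, 0 ≤ p ω)
    (X : Ω → α) (a : α) : 0 ≤ pr p X a :=
  Finset.sum_nonneg fun ω _ => hp ω

lemma le_pr {α : Type*} [DecidableEq α] {p : Ω → ℝ} (hp : ∀ ω, 0 ≤ p ω)
    (X : Ω → α) (ω : Ω) : p ω ≤ pr p X (X ω) :=
  Finset.single_le_sum (fun i _ => hp i) (by simp)

lemma pr_pos_iff {α : Type*} [DecidableEq α] {p : Ω → ℝ} (hp : ∀ ω, 0 ≤ p ω)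
    (X : Ω → α) (a : α) : 0 < pr p X a ↔ ∃ ω, 0 < p ω ∧ X ω = a := by
  constructor
  · intro h
    by_contra hc
    push_neg at hc
    have hz : pr p X a = 0 := Finset.sum_eq_zero fun ω hω => by
      simp only [Finset.mem_filter, Finset.mem_univ, true_and] at hω
      rcases lt_or_eq_of_le (hp ω) with h' | h'
      · exact absurd hω (hc ω h')
      · exact h'.symm
    rw [hz] at h; exact lt_irrefl 0 h
  · rintro ⟨ω, hω, rfl⟩
    exact lt_of_lt_of_le hω (le_pr hp X ω)

lemma pr_eq_zero_of_not_mem {α : Type*} [DecidableEq α] (p : Ω → ℝ)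
    (X : Ω → α) {a : α} (ha : a ∉ Finset.univ.image X) : pr p X a = 0 := by
  rw [pr]
  apply Finset.sum_eq_zero
  intro ω hω
  simp only [Finset.mem_filter, Finset.mem_univ, true_and] at hω
  exact absurd (Finset.mem_image_of_mem X (Finset.mem_univ ω)) (hω ▸ ha)

lemma ent_eq_sum_superset {α : Type*} [DecidableEq α] (p : Ω → ℝ)
    (X : Ω → α) {S : Finset α} (h : Finset.univ.image X ⊆ S) :
    ent p X = ∑ a ∈ S, Real.negMulLog (pr p X a) := by
  rw [ent]
  exact Finset.sum_subset h fun a _ ha => by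
    rw [pr_eq_zero_of_not_mem p X ha, Real.negMulLog_zero]

lemma pr_marginal {α β : Type*} [DecidableEq α] [DecidableEq β] (p : Ω → ℝ)
    (W : Ω → α) (Y : Ω → β) (y : β) :
    pr p Y y = ∑ w ∈ Finset.univ.image W, pr p (fun ω => (W ω, Y ω)) (w, y) := by
  rw [pr]
  rw [← Finset.sum_fiberwise_of_maps_to
    (g := W) (t := Finset.univ.image W)
    (fun ω _ => Finset.mem_image_of_mem W (Finset.mem_univ ω)) p]
  refine Finset.sum_congr rfl fun w _ => ?_
  rw [pr]
  refine Finset.sum_congr ?_ fun _ _ => rfl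
  ext ω
  simp [Prod.ext_iff, and_comm]

lemma negMulLog_term_le {ι : Type*} (s : Finset ι) (f : ι → ℝ)
    (hf : ∀ i ∈ s, 0 ≤ f i) {i : ι} (hi : i ∈ s) :
    -(f i) * Real.log (∑ j ∈ s, f j) ≤ Real.negMulLog (f i) := by
  rcases lt_or_eq_of_le (hf i hi) with h | h
  · have hle : f i ≤ ∑ j ∈ s, f j := Finset.single_le_sum hf hi
    have hlog : Real.log (f i) ≤ Real.log (∑ j ∈ s, f j) := Real.log_le_log h hle
    have := mul_le_mul_of_nonneg_left hlog (le_of_lt h)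
    rw [Real.negMulLog]; nlinarith
  · simp [Real.negMulLog, ← h]

lemma negMulLog_sum_le {ι : Type*} (s : Finset ι) (f : ι → ℝ)
    (hf : ∀ i ∈ s, 0 ≤ f i) :
    Real.negMulLog (∑ i ∈ s, f i) ≤ ∑ i ∈ s, Real.negMulLog (f i) := by
  have h1 : Real.negMulLog (∑ i ∈ s, f i)
      = ∑ i ∈ s, -(f i) * Real.log (∑ j ∈ s, f j) := by
    rw [Real.negMulLog, ← Finset.sum_mul, ← Finset.sum_neg_distrib]
  rw [h1]
  exact Finset.sum_le_sum fun i hi => negMulLog_term_le s f hf hi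

lemma negMulLog_sum_lt {ι : Type*} [DecidableEq ι] (s : Finset ι) (f : ι → ℝ)
    (hf : ∀ i ∈ s, 0 ≤ f i) {i j : ι} (hij : i ≠ j) (hi : i ∈ s) (hj : j ∈ s)
    (hfi : 0 < f i) (hfj : 0 < f j) :
    Real.negMulLog (∑ k ∈ s, f k) < ∑ k ∈ s, Real.negMulLog (f k) := by
  have h1 : Real.negMulLog (∑ k ∈ s, f k)
      = ∑ k ∈ s, -(f k) * Real.log (∑ m ∈ s, f m) := by
    rw [Real.negMulLog, ← Finset.sum_mul, ← Finset.sum_neg_distrib]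
  rw [h1]
  refine Finset.sum_lt_sum (fun k hk => negMulLog_term_le s f hf hk) ⟨i, hi, ?_⟩
  have hsum : f i < ∑ m ∈ s, f m := by
    have h2 : f i + ∑ m ∈ s.erase i, f m = ∑ m ∈ s, f m :=
      Finset.add_sum_erase s f hi
    have h3 : f j ≤ ∑ m ∈ s.erase i, f m :=
      Finset.single_le_sum (fun m hm => hf m (Finset.mem_of_mem_erase hm))
        (Finset.mem_erase.2 ⟨hij.symm, hj⟩)
    linarith
  have hlog : Real.log (f i) < Real.log (∑ m ∈ s, f m) := Real.log_lt_log hfi hsum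
  have := mul_lt_mul_of_pos_left hlog hfi
  rw [Real.negMulLog]; nlinarith

lemma negMulLog_sum_eq {ι : Type*} (s : Finset ι) (f : ι → ℝ)
    (hf : ∀ i ∈ s, 0 ≤ f i)
    (h1 : ∀ i ∈ s, ∀ j ∈ s, 0 < f i → 0 < f j → i = j) :
    Real.negMulLog (∑ i ∈ s, f i) = ∑ i ∈ s, Real.negMulLog (f i) := by
  by_cases hall : ∀ i ∈ s, f i = 0
  · rw [Finset.sum_eq_zero hall, Real.negMulLog_zero]
    exact (Finset.sum_eq_zero fun i hi => by rw [hall i hi, Real.negMulLog_zero]).symm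
  · push_neg at hall
    obtain ⟨i0, hi0, hne⟩ := hall
    have hpos : 0 < f i0 := lt_of_le_of_ne (hf i0 hi0) (Ne.symm hne)
    have hz : ∀ j ∈ s, j ≠ i0 → f j = 0 := fun j hj hji => by
      rcases lt_or_eq_of_le (hf j hj) with h | h
      · exact absurd (h1 j hj i0 hi0 h hpos) hji
      · exact h.symm
    rw [Finset.sum_eq_single_of_mem i0 hi0 hz,
        Finset.sum_eq_single_of_mem i0 hi0
          (fun j hj hji => by rw [hz j hj hji, Real.negMulLog_zero])]

end Aux

section Aux2
variable {Ω : Type*} [Fintype Ω]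

/-- `W` is determined by `Y` on the support of `p`. -/
def Det (p : Ω → ℝ) {α β : Type*} (W : Ω → α) (Y : Ω → β) : Prop :=
  ∀ ω ω', 0 < p ω → 0 < p ω' → Y ω = Y ω' → W ω = W ω'

lemma cent_eq_zero_iff {α β : Type*} [DecidableEq α] [DecidableEq β]
    (p : Ω → ℝ) (hp : ∀ ω, 0 ≤ p ω) (W : Ω → α) (Y : Ω → β) :
    cent p W Y = 0 ↔ Det p W Y := by
  set q : α × β → ℝ := pr p (fun ω => (W ω, Y ω)) with hq
  have hqnn : ∀ w y, 0 ≤ q (w, y) := fun w y => pr_nonneg hp _ _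
  have hqpos : ∀ w y, 0 < q (w, y) ↔ ∃ ω, 0 < p ω ∧ W ω = w ∧ Y ω = y := by
    intro w y
    rw [hq, pr_pos_iff hp]
    simp [Prod.ext_iff]
  have hWY : ent p (fun ω => (W ω, Y ω))
      = ∑ y ∈ Finset.univ.image Y, ∑ w ∈ Finset.univ.image W, Real.negMulLog (q (w, y)) := by
    rw [ent_eq_sum_superset p _ (S := (Finset.univ.image W) ×ˢ (Finset.univ.image Y))
      (by intro a ha
          simp only [Finset.mem_image, Finset.mem_univ, true_and] at ha
          obtain ⟨ω, rfl⟩ := ha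
          exact Finset.mem_product.2 ⟨Finset.mem_image_of_mem W (Finset.mem_univ ω),
            Finset.mem_image_of_mem Y (Finset.mem_univ ω)⟩)]
    rw [Finset.sum_product]
    exact Finset.sum_comm
  have hcent : cent p W Y = ∑ y ∈ Finset.univ.image Y,
      ((∑ w ∈ Finset.univ.image W, Real.negMulLog (q (w, y)))
        - Real.negMulLog (∑ w ∈ Finset.univ.image W, q (w, y))) := by
    rw [cent, hWY, ent, Finset.sum_sub_distrib]
    congr 1
    exact Finset.sum_congr rfl fun y _ => by rw [pr_marginal p W Y y]
  have hterm_nn : ∀ y ∈ Finset.univ.image Y,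
      0 ≤ (∑ w ∈ Finset.univ.image W, Real.negMulLog (q (w, y)))
        - Real.negMulLog (∑ w ∈ Finset.univ.image W, q (w, y)) := by
    intro y _
    have := negMulLog_sum_le (Finset.univ.image W) (fun w => q (w, y))
      (fun w _ => hqnn w y)
    linarith
  constructor
  · intro h0 ω ω' hω hω' hYeq
    by_contra hWne
    have hy : Y ω ∈ Finset.univ.image Y := Finset.mem_image_of_mem Y (Finset.mem_univ ω)
    have hall := (Finset.sum_eq_zero_iff_of_nonneg hterm_nn).1 (hcent ▸ h0) (Y ω) hy
    have h1 : 0 < q (W ω, Y ω) := (hqpos _ _).2 ⟨ω, hω, rfl, rfl⟩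
    have h2 : 0 < q (W ω', Y ω) := (hqpos _ _).2 ⟨ω', hω', rfl, hYeq.symm⟩
    have hlt := negMulLog_sum_lt (Finset.univ.image W) (fun w => q (w, Y ω))
      (fun w _ => hqnn w (Y ω)) hWne
      (Finset.mem_image_of_mem W (Finset.mem_univ ω))
      (Finset.mem_image_of_mem W (Finset.mem_univ ω')) h1 h2
    linarith
  · intro hdet
    rw [hcent]
    refine Finset.sum_eq_zero fun y _ => ?_
    have heq := negMulLog_sum_eq (Finset.univ.image W) (fun w => q (w, y))
      (fun w _ => hqnn w y)
      (fun w _ w' _ hw hw' => by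
        obtain ⟨ω, hω, hWω, hYω⟩ := (hqpos w y).1 hw
        obtain ⟨ω', hω', hWω', hYω'⟩ := (hqpos w' y).1 hw'
        rw [← hWω, ← hWω']
        exact hdet ω ω' hω hω' (hYω.trans hYω'.symm))
    linarith

lemma pr_comp_eq {α α' : Type*} [DecidableEq α] [DecidableEq α']
    (p : Ω → ℝ) (G : Ω → α) (f : α → α')
    (hf : ∀ a ∈ Finset.univ.image G, ∀ b ∈ Finset.univ.image G, f a = f b → a = b)
    {a : α} (ha : a ∈ Finset.univ.image G) :
    pr p (f ∘ G) (f a) = pr p G a := by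
  rw [pr, pr]
  refine Finset.sum_congr ?_ fun _ _ => rfl
  ext ω
  simp only [Finset.mem_filter, Finset.mem_univ, true_and, Function.comp]
  constructor
  · intro h
    exact hf (G ω) (Finset.mem_image_of_mem G (Finset.mem_univ ω)) a ha h
  · intro h; rw [h]

lemma ent_comp {α α' : Type*} [DecidableEq α] [DecidableEq α']
    (p : Ω → ℝ) (G : Ω → α) (f : α → α')
    (hf : ∀ a ∈ Finset.univ.image G, ∀ b ∈ Finset.univ.image G, f a = f b → a = b) :
    ent p (f ∘ G) = ent p G := by
  have himg : Finset.univ.image (f ∘ G) = (Finset.univ.image G).image f := by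
    rw [Finset.image_image]
  rw [ent, ent, himg, Finset.sum_image hf]
  exact Finset.sum_congr rfl fun a ha => by rw [pr_comp_eq p G f hf ha]

lemma exists_nat_embed {α : Type*} [DecidableEq α] (G : Ω → α) :
    ∃ e : α → ℕ, ∀ a ∈ Finset.univ.image G, ∀ b ∈ Finset.univ.image G,
      e a = e b → a = b := by
  classical
  set s := Finset.univ.image G with hs
  refine ⟨fun d => if h : d ∈ s then (s.equivFin ⟨d, h⟩ : Fin s.card).val else 0, ?_⟩
  intro a ha b hb hab
  simp only [dif_pos ha, dif_pos hb] at hab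
  have := s.equivFin.injective (Fin.val_injective hab)
  exact Subtype.ext_iff.1 this

end Aux2

/-- If (X,Y) is independent of Z, then mcf(X,(Y,Z)) = mcf(X,Y) up to
equivalence: any maximal common function `G` of X and (Y,Z) and any maximal common
function `G'` of X and Y have equal entropy, and each is a common function of both pairs. -/
theorem mcf_pair_indep {Ω α β γ δ ε : Type*} [Fintype Ω]
    [DecidableEq α] [DecidableEq β] [DecidableEq γ] [DecidableEq δ] [DecidableEq ε]
    (p : Ω → ℝ) (hp : IsProb p)
    (X : Ω → α) (Y : Ω → β) (Z : Ω → γ)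
    (hind : IndepRV p (fun ω => (X ω, Y ω)) Z)
    (G : Ω → δ) (G' : Ω → ε)
    (hG : IsMCF p X (fun ω => (Y ω, Z ω)) G)
    (hG' : IsMCF p X Y G') :
    ent p G = ent p G' ∧
    IsCF p X Y G ∧
    IsCF p X (fun ω => (Y ω, Z ω)) G' := by
  have hp0 := hp.1
  have hGX : Det p G X := (cent_eq_zero_iff p hp0 G X).1 hG.1.1
  have hGYZ : Det p G (fun ω => (Y ω, Z ω)) :=
    (cent_eq_zero_iff p hp0 G _).1 hG.1.2
  have hG'X : Det p G' X := (cent_eq_zero_iff p hp0 G' X).1 hG'.1.1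
  have hG'Y : Det p G' Y := (cent_eq_zero_iff p hp0 G' Y).1 hG'.1.2
  -- the key step: G is determined by Y on the support
  have hGY : Det p G Y := by
    intro ω1 ω2 h1 h2 hY
    have hxy : 0 < pr p (fun ω => (X ω, Y ω)) (X ω1, Y ω1) :=
      lt_of_lt_of_le h1 (le_pr hp0 (fun ω => (X ω, Y ω)) ω1)
    have hz : 0 < pr p Z (Z ω2) := lt_of_lt_of_le h2 (le_pr hp0 Z ω2)
    have hpos : 0 < pr p (fun ω => ((X ω, Y ω), Z ω)) ((X ω1, Y ω1), Z ω2) := by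
      rw [hind (X ω1, Y ω1) (Z ω2)]
      exact mul_pos hxy hz
    obtain ⟨ω3, h3, heq⟩ := (pr_pos_iff hp0 _ _).1 hpos
    simp only [Prod.mk.injEq] at heq
    obtain ⟨⟨hx3, hy3⟩, hz3⟩ := heq
    have e1 : G ω3 = G ω1 := hGX ω3 ω1 h3 h1 hx3
    have e2 : G ω3 = G ω2 := hGYZ ω3 ω2 h3 h2 (by
      simp only [Prod.mk.injEq]
      exact ⟨hy3.trans hY, hz3⟩)
    exact e1.symm.trans e2
  have hG'YZ : Det p G' (fun ω => (Y ω, Z ω)) := fun ω ω' h h' hyz =>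
    hG'Y ω ω' h h' (congrArg Prod.fst hyz)
  have cGY : cent p G Y = 0 := (cent_eq_zero_iff p hp0 G Y).2 hGY
  have cG'YZ : cent p G' (fun ω => (Y ω, Z ω)) = 0 :=
    (cent_eq_zero_iff p hp0 G' _).2 hG'YZ
  obtain ⟨e, he⟩ := exists_nat_embed G
  obtain ⟨e', he'⟩ := exists_nat_embed G'
  have hent1 : ent p G ≤ ent p G' := by
    have hcf : IsCF p X Y (e ∘ G) :=
      ⟨(cent_eq_zero_iff p hp0 (e ∘ G) X).2
          (fun ω ω' a b c => congrArg e (hGX ω ω' a b c)),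
        (cent_eq_zero_iff p hp0 (e ∘ G) Y).2
          (fun ω ω' a b c => congrArg e (hGY ω ω' a b c))⟩
    have := hG'.2 (e ∘ G) hcf
    rwa [ent_comp p G e he] at this
  have hent2 : ent p G' ≤ ent p G := by
    have hcf : IsCF p X (fun ω => (Y ω, Z ω)) (e' ∘ G') :=
      ⟨(cent_eq_zero_iff p hp0 (e' ∘ G') X).2
          (fun ω ω' a b c => congrArg e' (hG'X ω ω' a b c)),
        (cent_eq_zero_iff p hp0 (e' ∘ G') _).2
          (fun ω ω' a b c => congrArg e' (hG'YZ ω ω' a b c))⟩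
    have := hG.2 (e' ∘ G') hcf
    rwa [ent_comp p G' e' he'] at this
  exact ⟨le_antisymm hent1 hent2, ⟨hG.1.1, cGY⟩, ⟨hG'.1.1, cG'YZ⟩⟩
end

section
/- Schwartz–Zippel lemma: Let P(X_1,…,X_n) be a nonzero polynomial in n variables of total degree at most d with coefficients in a finite field F_q, and let S be a nonempty subset of F_q. If (x_1,…,x_n) is chosen uniformly at random from S^n, then the probability that P(x_1,…,x_n)=0 is at most d/|S|. -/
open Finset MvPolynomial

private lemma sz_card {F : Type*} [Field F] [DecidableEq F] :
    ∀ (n : ℕ) (P : MvPolynomial (Fin n) F), P ≠ 0 → ∀ (S : Finset F),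
    ((Fintype.piFinset (fun _ : Fin n => S)).filter
        (fun x => MvPolynomial.eval x P = 0)).card * S.card
      ≤ P.totalDegree * S.card ^ n := by
  intro n
  induction n with
  | zero =>
    intro P hP S
    have : ∀ x : Fin 0 → F, MvPolynomial.eval x P ≠ 0 := by
      intro x
      have : P = C (MvPolynomial.eval x P) := by
        rw [eq_C_of_isEmpty P]; simp
      intro h
      rw [h, map_zero] at this
      exact hP this
    rw [Finset.filter_false_of_mem (fun x _ => this x)]
    simp
  | succ n ih =>
    intro P hP S
    classical
    set Q : Polynomial (MvPolynomial (Fin n) F) := finSuccEquiv F n P with hQ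
    have hQ0 : Q ≠ 0 := by
      simp only [hQ, Ne, EmbeddingLike.map_eq_zero_iff]
      exact hP
    set k := Q.natDegree with hk
    have hlead : Q.coeff k ≠ 0 := Polynomial.leadingCoeff_ne_zero.mpr hQ0
    have hdeg : (Q.coeff k).totalDegree + k ≤ P.totalDegree :=
      MvPolynomial.totalDegree_coeff_finSuccEquiv_add_le P k hlead
    -- the evaluation identity
    have heval : ∀ x : Fin (n+1) → F,
        MvPolynomial.eval x P =
          Polynomial.eval (x 0) (Q.map (MvPolynomial.eval (Fin.tail x))) := by
      intro x
      have := eval_eq_eval_mv_eval' (Fin.tail x) (x 0) P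
      rw [Fin.cons_self_tail] at this
      exact this
    set T := Fintype.piFinset (fun _ : Fin n => S) with hT
    set Z := (Fintype.piFinset (fun _ : Fin (n+1) => S)).filter
        (fun x => MvPolynomial.eval x P = 0) with hZ
    set A := T.filter (fun s => MvPolynomial.eval s (Q.coeff k) = 0) with hA
    set B := T.filter (fun s => MvPolynomial.eval s (Q.coeff k) ≠ 0) with hB
    set Z₁ := Z.filter (fun x => MvPolynomial.eval (Fin.tail x) (Q.coeff k) = 0) with hZ1
    set Z₂ := Z.filter (fun x => MvPolynomial.eval (Fin.tail x) (Q.coeff k) ≠ 0) with hZ2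
    have htail : ∀ x ∈ Z, Fin.tail x ∈ T := by
      intro x hx
      rw [hZ, Finset.mem_filter] at hx
      rw [hT, Fintype.mem_piFinset]
      intro i
      exact Fintype.mem_piFinset.mp hx.1 i.succ
    have hhead : ∀ x ∈ Z, x 0 ∈ S := by
      intro x hx
      rw [hZ, Finset.mem_filter] at hx
      exact Fintype.mem_piFinset.mp hx.1 0
    -- fiber bound for Z₁
    have h1 : Z₁.card ≤ S.card * A.card := by
      apply Finset.card_le_mul_card_image_of_maps_to (f := Fin.tail)
      · intro x hx
        rw [hZ1, Finset.mem_filter] at hx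
        rw [hA, Finset.mem_filter]
        exact ⟨htail x hx.1, hx.2⟩
      · intro s _
        apply Finset.card_le_card_of_injOn (fun x => x 0)
        · intro x hx
          rw [Finset.mem_coe, Finset.mem_filter] at hx
          exact hhead x ((Finset.mem_filter.mp hx.1).1)
        · intro x hx y hy hxy
          rw [Finset.mem_coe, Finset.mem_filter] at hx hy
          have : Fin.cons (x 0) (Fin.tail x) = Fin.cons (y 0) (Fin.tail y) := by
            rw [show x 0 = y 0 from hxy, hx.2, hy.2]
          rwa [Fin.cons_self_tail, Fin.cons_self_tail] at this
    -- fiber bound for Z₂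
    have h2 : Z₂.card ≤ k * B.card := by
      apply Finset.card_le_mul_card_image_of_maps_to (f := Fin.tail)
      · intro x hx
        rw [hZ2, Finset.mem_filter] at hx
        rw [hB, Finset.mem_filter]
        exact ⟨htail x hx.1, hx.2⟩
      · intro s hs
        rw [hB, Finset.mem_filter] at hs
        set q : Polynomial F := Q.map (MvPolynomial.eval s) with hq
        have hqk : q.coeff k ≠ 0 := by
          rw [hq, Polynomial.coeff_map]
          exact hs.2
        have hq0 : q ≠ 0 := fun h => hqk (by rw [h, Polynomial.coeff_zero])
        have hqdeg : q.natDegree ≤ k := Polynomial.natDegree_map_le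
        calc (Z₂.filter (fun x => Fin.tail x = s)).card
            ≤ ((S.filter (fun y => Polynomial.eval y q = 0))).card := by
              apply Finset.card_le_card_of_injOn (fun x => x 0)
              · intro x hx
                rw [Finset.mem_coe, Finset.mem_filter] at hx
                obtain ⟨hx1, hx2⟩ := hx
                rw [hZ2, Finset.mem_filter] at hx1
                obtain ⟨hxZ, _⟩ := hx1
                rw [Finset.mem_coe, Finset.mem_filter]
                refine ⟨hhead x hxZ, ?_⟩
                have := (Finset.mem_filter.mp hxZ).2
                rw [heval x, hx2] at this
                exact this
              · intro x hx y hy hxy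
                rw [Finset.mem_coe, Finset.mem_filter] at hx hy
                have : Fin.cons (x 0) (Fin.tail x) = Fin.cons (y 0) (Fin.tail y) := by
                  rw [show x 0 = y 0 from hxy, hx.2, hy.2]
                rwa [Fin.cons_self_tail, Fin.cons_self_tail] at this
          _ ≤ q.natDegree := by
              apply Polynomial.card_le_degree_of_subset_roots
              intro y hy
              rw [Finset.mem_val, Finset.mem_filter] at hy
              rw [Polynomial.mem_roots hq0]
              exact hy.2
          _ ≤ k := hqdeg
    have hAcard : A.card * S.card ≤ (Q.coeff k).totalDegree * S.card ^ n :=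
      ih (Q.coeff k) hlead S
    have hBcard : B.card ≤ S.card ^ n := by
      calc B.card ≤ T.card := Finset.card_filter_le _ _
        _ = S.card ^ n := by simp [hT]
    have hZsplit : Z.card ≤ Z₁.card + Z₂.card :=
      le_of_eq (Finset.card_filter_add_card_filter_not (s := Z)
        (p := fun x => MvPolynomial.eval (Fin.tail x) (Q.coeff k) = 0)).symm
    calc Z.card * S.card ≤ (Z₁.card + Z₂.card) * S.card := by
          exact Nat.mul_le_mul_right _ hZsplit
      _ ≤ (S.card * A.card + k * B.card) * S.card :=
          Nat.mul_le_mul_right _ (Nat.add_le_add h1 h2)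
      _ = (A.card * S.card) * S.card + k * (B.card * S.card) := by ring
      _ ≤ ((Q.coeff k).totalDegree * S.card ^ n) * S.card + k * (S.card ^ n * S.card) := by
          apply Nat.add_le_add
          · exact Nat.mul_le_mul_right _ hAcard
          · exact Nat.mul_le_mul_left _ (Nat.mul_le_mul_right _ hBcard)
      _ = ((Q.coeff k).totalDegree + k) * S.card ^ (n+1) := by ring
      _ ≤ P.totalDegree * S.card ^ (n+1) := Nat.mul_le_mul_right _ hdeg

/-- Schwartz–Zippel: if `P` is a nonzero polynomial in `n` variables over a
finite field `F` of total degree at most `d`, and `S` is a nonempty finite subset of `F`,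
then the probability that a uniformly random point of `S^n` is a zero of `P` is at most
`d / |S|`. -/
theorem schwartz_zippel {F : Type*} [Field F] [Fintype F] [DecidableEq F]
    {n d : ℕ} (P : MvPolynomial (Fin n) F) (hP : P ≠ 0) (hd : P.totalDegree ≤ d)
    (S : Finset F) (hS : S.Nonempty) :
    (((Fintype.piFinset (fun _ : Fin n => S)).filter
        (fun x => MvPolynomial.eval x P = 0)).card : ℝ) / (S.card : ℝ) ^ n
      ≤ (d : ℝ) / (S.card : ℝ) := by
  have hS0 : (0 : ℝ) < (S.card : ℝ) := by
    exact_mod_cast Finset.card_pos.mpr hS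
  have key : (((Fintype.piFinset (fun _ : Fin n => S)).filter
        (fun x => MvPolynomial.eval x P = 0)).card) * S.card ≤ d * S.card ^ n := by
    calc _ ≤ P.totalDegree * S.card ^ n := sz_card n P hP S
      _ ≤ d * S.card ^ n := Nat.mul_le_mul_right _ hd
  rw [div_le_div_iff₀ (by positivity) hS0]
  calc (((Fintype.piFinset (fun _ : Fin n => S)).filter
        (fun x => MvPolynomial.eval x P = 0)).card : ℝ) * (S.card : ℝ)
      ≤ (d : ℝ) * (S.card : ℝ) ^ n := by exact_mod_cast key
end

section
/- Let M be an s×s matrix whose (k,j) entry is L_j(Y_k), where Y_k = (X_{k1},…,X_{km}) are indeterminates and each L_j is a fixed F_q-linear form in m variables (so row k of M depends only on the indeterminates Y_k, with the same linear forms L_1,…,L_s used in every row). Then det(M) is the zero polynomial in F_q[X_{11},…,X_{sm}] if and only if there exists a nonzero vector λ ∈ F_q^s with M·λ^T = 0 (as an identity of polynomials). -/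
open MvPolynomial

/-- Let `M` be the s×s matrix of polynomials with `M k j = L_j(Y_k)`, where
`Y_k = (X_{k,1},…,X_{k,m})` are indeterminates and `L_j(Y_k) = ∑ i, A i j • X_{k,i}` are
fixed linear forms (the same in every row, row `k` using only the variables `Y_k`).
Then `det M` is the zero polynomial iff there is a nonzero vector `λ ∈ F^s` with
`M · λᵀ = 0` as an identity of polynomials. -/
theorem det_row_linear_zero_iff {F : Type*} [Field F] [Fintype F]
    {s m : ℕ} (hs : 0 < s) (hsm : s ≤ m)
    (A : Matrix (Fin m) (Fin s) F)
    (M : Matrix (Fin s) (Fin s) (MvPolynomial (Fin s × Fin m) F))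
    (hM : ∀ k j, M k j = ∑ i : Fin m, MvPolynomial.C (A i j) * MvPolynomial.X (k, i)) :
    M.det = 0 ↔
      ∃ lam : Fin s → F, lam ≠ 0 ∧
        M.mulVec (fun j => MvPolynomial.C (lam j)) = 0 := by
  -- key computation: M.mulVec (C ∘ lam) in terms of A.mulVec lam
  have key : ∀ lam : Fin s → F, A.mulVec lam = 0 →
      M.mulVec (fun j => MvPolynomial.C (lam j)) = 0 := by
    intro lam hAlam
    funext k
    have : ∀ i : Fin m, (A.mulVec lam) i = 0 := fun i => congrFun hAlam i
    simp only [Matrix.mulVec, dotProduct, hM, Pi.zero_apply, Finset.sum_mul]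
    rw [Finset.sum_comm]
    refine Finset.sum_eq_zero fun i _ => ?_
    have : (∑ j : Fin s, MvPolynomial.C (A i j) * MvPolynomial.X (k, i) *
        MvPolynomial.C (lam j)) =
        MvPolynomial.C ((A.mulVec lam) i) * MvPolynomial.X (k, i) := by
      rw [Matrix.mulVec, dotProduct, map_sum, Finset.sum_mul]
      refine Finset.sum_congr rfl fun j _ => ?_
      rw [map_mul]
      ring
    rw [this, hAlam]
    simp
  constructor
  · intro hdet
    by_contra hcon
    push_neg at hcon
    -- A.mulVecLin is injective
    have hinj : Function.Injective A.mulVecLin := by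
      rw [← LinearMap.ker_eq_bot, LinearMap.ker_eq_bot']
      intro lam hlam
      by_contra hne
      exact hcon lam hne (key lam hlam)
    -- hence A.transpose.mulVecLin is surjective
    have hrank : A.rank = s := by
      rw [Matrix.rank, LinearMap.finrank_range_of_inj hinj]
      simp [Module.finrank_pi]
    have hsurj : Function.Surjective A.transpose.mulVecLin := by
      rw [← LinearMap.range_eq_top]
      apply Submodule.eq_top_of_finrank_eq
      have : A.transpose.rank = s := by rw [Matrix.rank_transpose, hrank]
      rw [Matrix.rank] at this
      rw [this]
      simp [Module.finrank_pi]
    -- choose Y k the preimage of the k-th standard basis vector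
    choose Y hY using fun k : Fin s => hsurj (Pi.single k 1)
    set ev : MvPolynomial (Fin s × Fin m) F →ₐ[F] F :=
      MvPolynomial.aeval (fun p : Fin s × Fin m => Y p.1 p.2) with hev
    have hMap : M.map ev = 1 := by
      funext k j
      have h1 : ev (M k j) = (A.transpose.mulVec (Y k)) j := by
        rw [hM]
        simp [hev, Matrix.mulVec, dotProduct, Matrix.transpose_apply]
      have h2 : (A.transpose.mulVec (Y k)) j = (Pi.single k 1 : Fin s → F) j := by
        have h := congrFun (hY k) j
        rw [Matrix.mulVecLin_apply] at h
        exact h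
      simp only [Matrix.map_apply, h1, h2, Pi.single_apply, Matrix.one_apply]
      simp [eq_comm]
    have : (1 : F) = 0 := by
      have := (RingHom.map_det ev.toRingHom M).symm
      rw [hdet] at this
      simp only [AlgHom.toRingHom_eq_coe, RingHom.mapMatrix_apply, map_zero,
        AlgHom.coe_ringHom_mk, RingHom.coe_coe] at this
      calc (1 : F) = (1 : Matrix (Fin s) (Fin s) F).det := by simp
        _ = (M.map ev).det := by rw [hMap]
        _ = 0 := this
    exact one_ne_zero this
  · rintro ⟨lam, hlam, hmul⟩
    refine Matrix.exists_mulVec_eq_zero_iff.mp ⟨fun j => MvPolynomial.C (lam j), ?_, hmul⟩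
    intro h
    apply hlam
    funext j
    have := congrFun h j
    simpa using this
end

section
/- Let W be an (m+k) × m matrix over F_q with linearly independent columns, where k, m ≥ 1. If the column span of W does not contain any nonzero scalar multiple of a standard basis vector, then there exists a 1 × (m+k) row vector S with all entries in F_{q^k} \ {0} such that S·W = 0 (viewing the entries of W in the extension field F_{q^k}). -/
open Module

lemma leftker_finrank {F : Type*} [Field F] {n r : ℕ} (A : Matrix (Fin r) (Fin n) F)
    (h : LinearIndependent F A) :
    Module.finrank F (LinearMap.ker A.mulVecLin) = n - r := by
  have h1 := LinearMap.finrank_range_add_finrank_ker A.mulVecLin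
  have h2 : Module.finrank F (LinearMap.range A.mulVecLin) = r := by
    have hr : A.rank = r := by
      rw [← Matrix.rank_transpose, Matrix.rank, Matrix.range_mulVecLin]
      change finrank F (Submodule.span F (Set.range A)) = r
      simpa using finrank_span_eq_card h
    simpa [Matrix.rank] using hr
  rw [h2, Module.finrank_fin_fun] at h1
  omega

/-- Let `W` be an `(m+k) × m` matrix over `F = F_q` with linearly independent
columns, `k, m ≥ 1`. If the column span of `W` contains no nonzero scalar multiple of a
standard basis vector, then there is a row vector `S` of length `m+k` with all entries in
`K \ {0}`, where `K = F_{q^k}` is the degree-`k` extension of `F`, such that `S·W = 0`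
(entries of `W` viewed in `K`). -/
theorem exists_nonzero_annihilator {F K : Type*} [Field F] [Fintype F]
    [Field K] [Fintype K] [Algebra F K]
    {m k : ℕ} (hm : 1 ≤ m) (hk : 1 ≤ k)
    (hdim : Module.finrank F K = k)
    (W : Matrix (Fin (m + k)) (Fin m) F)
    (hrank : LinearIndependent F W.transpose)
    (hstd : ¬ ∃ (i : Fin (m + k)) (c : F), c ≠ 0 ∧
        (c • (Pi.single i 1 : Fin (m + k) → F)) ∈ Submodule.span F (Set.range W.transpose)) :
    ∃ S : Fin (m + k) → K, (∀ i, S i ≠ 0) ∧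
      ∀ j : Fin m, ∑ i : Fin (m + k), S i * algebraMap F K (W i j) = 0 := by
  set N := LinearMap.ker (W.transpose).mulVecLin with hN
  have hNmem : ∀ v : Fin (m + k) → F, v ∈ N ↔ ∀ j, ∑ i, W i j * v i = 0 := by
    intro v
    simp [hN, LinearMap.mem_ker, Matrix.mulVecLin_apply, Matrix.mulVec, Matrix.vecMul, dotProduct,
      funext_iff, Matrix.transpose_apply, mul_comm]
  have hNrank : Module.finrank F N = k := by
    rw [hN, leftker_finrank _ hrank]; omega
  -- Lemma B : for each i there is v ∈ N with v i ≠ 0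
  have hB : ∀ i : Fin (m + k), ∃ v ∈ N, v i ≠ 0 := by
    intro i
    by_contra hcon
    push_neg at hcon
    have hei : (Pi.single i 1 : Fin (m + k) → F) ∉ Submodule.span F (Set.range W.transpose) := by
      intro hmem
      exact hstd ⟨i, 1, one_ne_zero, by simpa using hmem⟩
    set C : Fin (m + 1) → Fin (m + k) → F := Fin.snoc (fun j => W.transpose j) (Pi.single i 1) with hC
    have hCind : LinearIndependent F C :=
      linearIndependent_fin_snoc.mpr ⟨hrank, hei⟩
    have hker : Module.finrank F (LinearMap.ker (Matrix.of C).mulVecLin) = (m + k) - (m + 1) :=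
      leftker_finrank (Matrix.of C) hCind
    have hle : N ≤ LinearMap.ker (Matrix.of C).mulVecLin := by
      intro v hv
      rw [LinearMap.mem_ker]
      funext j
      show ∑ i', C j i' * v i' = 0
      induction j using Fin.lastCases with
      | last =>
        simp only [hC, Fin.snoc_last]
        have h1 : ∑ i', (Pi.single i 1 : Fin (m + k) → F) i' * v i' = v i := by
          rw [Finset.sum_eq_single i]
          · simp
          · intro b _ hb; simp [Pi.single_apply, hb]
          · simp
        rw [h1, hcon v hv]
      | cast jj =>
        simp only [hC, Fin.snoc_castSucc]
        have := (hNmem v).mp hv jj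
        simpa [Matrix.transpose_apply, mul_comm] using this
    have := Submodule.finrank_mono hle
    rw [hNrank, hker] at this
    omega
  -- bases
  let b : Basis (Fin k) F N := Module.finBasisOfFinrankEq F N hNrank
  let κ : Basis (Fin k) F K := Module.finBasisOfFinrankEq F K hdim
  refine ⟨fun i => ∑ j, ((b j : Fin (m + k) → F) i) • κ j, ?_, ?_⟩
  · intro i hzero
    have hc : ∀ j : Fin k, ((b j : Fin (m + k) → F) i) = 0 := by
      have := Fintype.linearIndependent_iff.mp κ.linearIndependent
        (fun j => ((b j : Fin (m + k) → F) i)) hzero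
      exact this
    obtain ⟨v, hvN, hvi⟩ := hB i
    apply hvi
    have hrepr := b.sum_repr ⟨v, hvN⟩
    have : v = ∑ j, b.repr ⟨v, hvN⟩ j • (b j : Fin (m + k) → F) := by
      have := congrArg (Subtype.val) hrepr
      simpa only [Submodule.coe_sum, Submodule.coe_smul] using this.symm
    rw [this]
    simp only [Finset.sum_apply, Pi.smul_apply, smul_eq_mul]
    exact Finset.sum_eq_zero fun j _ => by rw [hc j, mul_zero]
  · intro j
    have key : ∀ jj : Fin k, ∑ i, (((b jj : Fin (m + k) → F) i) • κ jj) * algebraMap F K (W i j)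
        = 0 := by
      intro jj
      have hmem := (hNmem (b jj)).mp (b jj).2 j
      calc ∑ i, (((b jj : Fin (m + k) → F) i) • κ jj) * algebraMap F K (W i j)
          = ∑ i, ((W i j * (b jj : Fin (m + k) → F) i) • κ jj) := by
            refine Finset.sum_congr rfl fun i _ => ?_
            rw [Algebra.smul_def, Algebra.smul_def, map_mul]
            ring
        _ = (∑ i, W i j * (b jj : Fin (m + k) → F) i) • κ jj := by
            rw [Finset.sum_smul]
        _ = 0 := by rw [hmem, zero_smul]
    calc ∑ i, (∑ jj, ((b jj : Fin (m + k) → F) i) • κ jj) * algebraMap F K (W i j)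
        = ∑ i, ∑ jj, (((b jj : Fin (m + k) → F) i) • κ jj) * algebraMap F K (W i j) := by
          refine Finset.sum_congr rfl fun i _ => ?_; rw [Finset.sum_mul]
      _ = ∑ jj, ∑ i, (((b jj : Fin (m + k) → F) i) • κ jj) * algebraMap F K (W i j) :=
          Finset.sum_comm
      _ = 0 := Finset.sum_eq_zero fun jj _ => key jj
end

section
/- Let W be a (Σ_{e∈E} n_e) × n_w full-column-rank matrix over a field F partitioned into blocks of n_e rows (e ∈ E), let s = min_e n_e, and suppose n_w ≤ Σ_e n_e − s. For a generic s × (Σ_e n_e) matrix S (whose entries are linear forms over F in sm free indeterminates parametrizing the solution space of S·W = 0, where m = Σ_e n_e − n_w), write S = (S_e, T_e)_{e∈E} with S_e the s×s submatrix formed by the first s columns of block e. If W is irreducible, then the polynomial Π_{e∈E} det(S_e), in the sm indeterminates, is not identically zero. -/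
open MvPolynomial

/-- Let `W` be a full-column-rank `(Σ_e n_e) × n_w` matrix over `F_q`,
row-partitioned into blocks of `n_e` rows, with `s = min_e n_e` and
`n_w ≤ Σ_e n_e − s`, `m = Σ_e n_e − n_w`. Let `S` be the generic s×(Σ_e n_e) matrix
whose entries are linear forms (row `k` using only the `m` free indeterminates of row
`k`) parametrizing the solution space of `S·W = 0` (every scalar solution is a
specialization). If `W` is irreducible, then the polynomial `Π_e det(S_e)` — where
`S_e` is the s×s submatrix formed by the first `s` columns of block `e` — is not
identically zero. -/
theorem prod_det_ne_zero_of_irreducible {F E : Type*} [Field F] [Fintype F]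
    [Fintype E] [Nonempty E] [DecidableEq E]
    {nw : ℕ} (n : E → ℕ) (hn : ∀ e, 0 < n e)
    (s : ℕ) (hs : s = Finset.univ.inf' Finset.univ_nonempty n)
    (hse : ∀ e, s ≤ n e)
    (m : ℕ) (hm : m = (∑ e : E, n e) - nw)
    (W : Matrix ((e : E) × Fin (n e)) (Fin nw) F)
    (hrank : LinearIndependent F W.transpose)
    (hnw : nw ≤ (∑ e : E, n e) - s)
    (hirr : ¬ ∃ (e : E) (v : ((e' : E) × Fin (n e')) → F),
        v ≠ 0 ∧ (∀ j : (e' : E) × Fin (n e'), j.1 ≠ e → v j = 0) ∧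
        v ∈ Submodule.span F (Set.range W.transpose))
    (S : Matrix (Fin s) ((e : E) × Fin (n e)) (MvPolynomial (Fin s × Fin m) F))
    (c : Fin s → ((e : E) × Fin (n e)) → Fin m → F)
    (hlin : ∀ k j, S k j = ∑ i : Fin m, MvPolynomial.C (c k j i) * MvPolynomial.X (k, i))
    (hsol : S * W.map (MvPolynomial.C : F → MvPolynomial (Fin s × Fin m) F) = 0)
    (hsurj : ∀ S₀ : Matrix (Fin s) ((e : E) × Fin (n e)) F, S₀ * W = 0 →
        ∃ t : Fin s × Fin m → F, ∀ k j, MvPolynomial.eval t (S k j) = S₀ k j) :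
    (∏ e : E, Matrix.det (fun a b : Fin s => S a ⟨e, Fin.castLE (hse e) b⟩)) ≠ 0 := by
  classical
  rw [Finset.prod_ne_zero_iff]
  intro e _
  -- the map `v ↦ v ᵥ* W`
  set ψ : (((e' : E) × Fin (n e')) → F) →ₗ[F] (Fin nw → F) := W.vecMulLinear with hψdef
  -- `ψ` is surjective since `W` has full column rank
  have hψsurj : LinearMap.range ψ = ⊤ := by
    apply Submodule.eq_top_of_finrank_eq
    have h1 : LinearMap.range ψ = LinearMap.range (Matrix.mulVecLin W.transpose) := by
      rw [Matrix.mulVecLin_transpose]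
    have h2 : W.transpose.rank = nw := by
      have := hrank.rank_matrix; rw [Fintype.card_fin] at this; exact this
    rw [h1, Module.finrank_fintype_fun_eq_card, Fintype.card_fin]
    exact h2
  -- projection to the first `s` coordinates of block `e`
  set π : (((e' : E) × Fin (n e')) → F) →ₗ[F] (Fin s → F) :=
    LinearMap.funLeft F F (fun b : Fin s => (⟨e, Fin.castLE (hse e) b⟩ : (e' : E) × Fin (n e')))
    with hπdef
  set K : Submodule F (((e' : E) × Fin (n e')) → F) := LinearMap.ker ψ with hKdef
  -- key claim: `π` restricted to `K` is surjective
  have hproj : Submodule.map π K = ⊤ := by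
    by_contra hne
    obtain ⟨φ, hφne, hφ⟩ := Submodule.exists_dual_map_eq_bot_of_lt_top
      (lt_top_iff_ne_top.mpr hne) inferInstance
    have hφK : ∀ v ∈ K, φ (π v) = 0 := by
      intro v hv
      have : φ (π v) ∈ (Submodule.map π K).map φ :=
        Submodule.mem_map_of_mem (Submodule.mem_map_of_mem hv)
      rw [hφ] at this
      exact (Submodule.mem_bot F).mp this
    -- factor `φ ∘ π` through `ψ`
    obtain ⟨σ, hσ⟩ := ψ.exists_rightInverse_of_surjective hψsurj
    set g : (((e' : E) × Fin (n e')) → F) →ₗ[F] F := φ ∘ₗ π with hgdef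
    set f : (Fin nw → F) →ₗ[F] F := g ∘ₗ σ with hfdef
    have hfac : ∀ v, g v = f (ψ v) := by
      intro v
      have hker : v - σ (ψ v) ∈ K := by
        simp only [hKdef, LinearMap.mem_ker, map_sub]
        have : ψ (σ (ψ v)) = ψ v := by
          have := congrArg (fun (h : (Fin nw → F) →ₗ[F] (Fin nw → F)) => h (ψ v)) hσ
          simpa using this
        rw [this, sub_self]
      have h0 := hφK _ hker
      rw [map_sub, map_sub, sub_eq_zero] at h0
      exact h0
    -- the offending vector
    set u : ((e' : E) × Fin (n e')) → F := fun j => g (Pi.single j 1) with hudef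
    -- `u` lies in the span of the columns of `W`
    have humem : u ∈ Submodule.span F (Set.range W.transpose) := by
      have hcol : u = ∑ ci : Fin nw, f (Pi.single ci 1) • W.transpose ci := by
        funext j
        have h1 : ψ (Pi.single j 1) = fun ci => W j ci := by
          funext ci
          simp only [hψdef, Matrix.vecMulLinear_apply, Matrix.vecMul, dotProduct,
            Pi.single_apply]
          rw [Finset.sum_eq_single j]
          · simp
          · intro b _ hb; simp [hb]
          · intro h; exact absurd (Finset.mem_univ j) h
        have h2 : u j = f (fun ci => W j ci) := by
          show g (Pi.single j 1) = _
          rw [hfac, h1]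
        rw [h2, pi_eq_sum_univ (fun ci => W j ci), map_sum]
        simp only [Finset.sum_apply, Pi.smul_apply, smul_eq_mul, Matrix.transpose_apply]
        refine Finset.sum_congr rfl fun ci _ => ?_
        rw [map_smul]
        have : (fun j' : Fin nw => if ci = j' then (1 : F) else 0) = Pi.single ci 1 := by
          funext j'; simp [Pi.single_apply, eq_comm]
        rw [this]
        simp [mul_comm]
      rw [hcol]
      exact Submodule.sum_mem _ fun ci _ => Submodule.smul_mem _ _
        (Submodule.subset_span ⟨ci, rfl⟩)
    -- `u` is supported in block `e`
    have hsupp : ∀ j : (e' : E) × Fin (n e'), j.1 ≠ e → u j = 0 := by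
      intro j hj
      have hπ0 : π (Pi.single j 1) = 0 := by
        funext b
        simp only [hπdef, LinearMap.funLeft_apply]
        rw [Pi.single_apply]
        have : j ≠ (⟨e, Fin.castLE (hse e) b⟩ : (e' : E) × Fin (n e')) := by
          intro h; exact hj (congrArg Sigma.fst h)
        simp [Ne.symm this]
      show φ (π (Pi.single j 1)) = 0
      rw [hπ0, map_zero]
    -- `u ≠ 0`
    have hune : u ≠ 0 := by
      have : ∃ b : Fin s, φ (Pi.single b 1) ≠ 0 := by
        by_contra hall
        push_neg at hall
        apply hφne
        ext w
        simpa using hall w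
      obtain ⟨b, hb⟩ := this
      intro h0
      apply hb
      have hval : u ⟨e, Fin.castLE (hse e) b⟩ = φ (Pi.single b 1) := by
        show φ (π (Pi.single (⟨e, Fin.castLE (hse e) b⟩ : (e' : E) × Fin (n e')) 1)) = _
        congr 1
        funext b'
        simp only [hπdef, LinearMap.funLeft_apply, Pi.single_apply]
        by_cases hbb : b = b'
        · subst hbb; simp
        · have : (⟨e, Fin.castLE (hse e) b⟩ : (e' : E) × Fin (n e'))
              ≠ ⟨e, Fin.castLE (hse e) b'⟩ := by
            intro h
            apply hbb
            have := congrArg (fun x : (e' : E) × Fin (n e') =>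
              (x.2 : ℕ)) h
            exact Fin.ext (by simpa using this)
          simp [this, hbb]
      rw [← hval, h0, Pi.zero_apply]
    exact hirr ⟨e, u, hune, hsupp, humem⟩
  -- pick rows making the block-`e` minor the identity
  have hpick : ∀ b : Fin s, ∃ v, v ∈ K ∧ π v = Pi.single b 1 := by
    intro b
    have : (Pi.single b 1 : Fin s → F) ∈ Submodule.map π K := by
      rw [hproj]; trivial
    obtain ⟨v, hv, hveq⟩ := this
    exact ⟨v, hv, hveq⟩
  choose v hvK hvπ using hpick
  set S₀ : Matrix (Fin s) ((e' : E) × Fin (n e')) F := fun k => v k with hS₀def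
  have hS₀sol : S₀ * W = 0 := by
    ext k ci
    have : ψ (v k) = 0 := hvK k
    have := congrFun this ci
    simpa [hψdef, Matrix.mul_apply, Matrix.vecMul, dotProduct] using this
  obtain ⟨t, ht⟩ := hsurj S₀ hS₀sol
  intro hdet
  have heval : (MvPolynomial.eval t)
      (Matrix.det (fun a b : Fin s => S a ⟨e, Fin.castLE (hse e) b⟩)) = 1 := by
    refine (RingHom.map_det (MvPolynomial.eval t) (fun a b : Fin s => S a ⟨e, Fin.castLE (hse e) b⟩)).trans ?_
    have h1 : (RingHom.mapMatrix (MvPolynomial.eval t))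
        (fun a b : Fin s => S a ⟨e, Fin.castLE (hse e) b⟩)
        = (1 : Matrix (Fin s) (Fin s) F) := by
      ext a b
      show (MvPolynomial.eval t) (S a ⟨e, Fin.castLE (hse e) b⟩) = _
      rw [ht]
      show v a ⟨e, Fin.castLE (hse e) b⟩ = _
      have hab := congrFun (hvπ a) b
      simp only [hπdef, LinearMap.funLeft_apply] at hab
      rw [hab]
      rcases eq_or_ne a b with h | h
      · subst h; simp
      · simp [Pi.single_apply, Matrix.one_apply, h, Ne.symm h]
    rw [h1, Matrix.det_one]
  rw [hdet, map_zero] at heval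
  exact zero_ne_one heval
end

section
/- Under the hypotheses of the previous setting (W irreducible, full column rank, n_w ≤ Σ_e n_e − s), if n > log_q(s·|E|), then there exists a matrix S over F_{q^n} with S·W = 0 (entries of W viewed in F_{q^n}) such that every block S_e (the s×s submatrix of the first s columns of block e) is invertible. -/
open Finset Matrix

set_option maxHeartbeats 1000000

/-- Fiber counting for a surjective additive hom between finite groups. -/
lemma aux_card_filter_mem {α β : Type*} [Fintype α] [Fintype β] [DecidableEq β]
    [AddGroup α] [AddGroup β] (f : α →+ β) (hf : Function.Surjective f) (D : Finset β) :
    (Finset.univ.filter fun x => f x ∈ D).card * Fintype.card β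
      = D.card * Fintype.card α := by
  classical
  have key : ∀ y : β, (Finset.univ.filter fun x => f x = y).card
      = (Finset.univ.filter fun x : α => f x = 0).card := by
    intro y
    obtain ⟨x0, hx0⟩ := hf y
    refine Finset.card_bij' (fun x _ => x - x0) (fun x _ => x + x0) ?_ ?_ ?_ ?_
    · intro a ha
      simp only [Finset.mem_filter, Finset.mem_univ, true_and] at ha ⊢
      simp [map_sub, ha, hx0]
    · intro a ha
      simp only [Finset.mem_filter, Finset.mem_univ, true_and] at ha ⊢
      simp [map_add, ha, hx0]
    · intro a _; simp
    · intro a _; simp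
  have h1 : ∀ D' : Finset β, (Finset.univ.filter fun x => f x ∈ D').card
      = D'.card * (Finset.univ.filter fun x : α => f x = 0).card := by
    intro D'
    rw [Finset.card_eq_sum_card_fiberwise
      (f := fun x => f x) (s := Finset.univ.filter fun x => f x ∈ D') (t := D') (fun x hx => (Finset.mem_filter.mp hx).2)]
    rw [Finset.sum_congr rfl (fun y hy => ?_), Finset.sum_const, smul_eq_mul]
    rw [← key y]
    congr 1
    ext x
    simp only [Finset.mem_filter, Finset.mem_univ, true_and]
    exact ⟨fun h => h.2, fun h => ⟨h ▸ hy, h⟩⟩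
  have h2 : Fintype.card α = Fintype.card β * (Finset.univ.filter fun x : α => f x = 0).card := by
    have := h1 Finset.univ
    simpa [Finset.card_univ] using this
  rw [h1 D, h2]
  ring

/-- The number of singular s×s matrices over a finite field is at most
`s * q ^ (s*(s-1) + (s-1))`. -/
lemma aux_card_det_zero (K : Type*) [Field K] [Fintype K] [DecidableEq K] (s : ℕ) :
    ((Finset.univ : Finset (Matrix (Fin s) (Fin s) K)).filter fun M => M.det = 0).card
      ≤ s * Fintype.card K ^ (s * (s - 1) + (s - 1)) := by
  classical
  set q := Fintype.card K with hq
  set Ψ : (a : Fin s) → (({b : Fin s // b ≠ a} → (Fin s → K)) × ({b : Fin s // b ≠ a} → K))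
      → Matrix (Fin s) (Fin s) K := fun a rc => Matrix.of fun b : Fin s =>
        if h : b = a then ∑ b', rc.2 b' • rc.1 b' else rc.1 ⟨b, h⟩ with hΨ
  have hsub : ((Finset.univ : Finset (Matrix (Fin s) (Fin s) K)).filter fun M => M.det = 0)
      ⊆ Finset.univ.biUnion fun a : Fin s => Finset.univ.image (Ψ a) := by
    intro M hM
    have hdet : M.det = 0 := (Finset.mem_filter.mp hM).2
    obtain ⟨v, hv0, hvM⟩ := Matrix.exists_vecMul_eq_zero_iff.mpr hdet
    obtain ⟨a, ha'⟩ := Function.ne_iff.mp hv0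
    have ha : v a ≠ 0 := by simpa using ha'
    refine Finset.mem_biUnion.mpr ⟨a, Finset.mem_univ a, Finset.mem_image.mpr
      ⟨(fun b' => M b'.1, fun b' => -(v a)⁻¹ * v b'.1), Finset.mem_univ _, ?_⟩⟩
    funext b
    show (if h : b = a then ∑ b' : {b' : Fin s // b' ≠ a}, (-(v a)⁻¹ * v b'.1) • M b'.1
        else M b) = M b
    by_cases h : b = a
    · subst h
      rw [dif_pos rfl]
      funext j
      rw [Finset.sum_apply]
      have hj : ∑ b', v b' * M b' j = 0 := congrFun hvM j
      have herase : v b * M b j + ∑ b' ∈ Finset.univ.erase b, v b' * M b' j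
          = ∑ b', v b' * M b' j :=
            Finset.add_sum_erase Finset.univ (fun b' => v b' * M b' j) (Finset.mem_univ b)
      have hsum : ∑ b' ∈ Finset.univ.erase b, v b' * M b' j = -(v b * M b j) := by
        rw [hj] at herase; linear_combination herase
      have hsubt : ∑ b' ∈ Finset.univ.erase b, (-(v b)⁻¹ * v b') * M b' j
          = ∑ b' : {b' : Fin s // b' ≠ b}, (-(v b)⁻¹ * v b'.1) * M b'.1 j :=
        Finset.sum_subtype (Finset.univ.erase b) (fun x => by simp)
          (fun b' => (-(v b)⁻¹ * v b') * M b' j)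
      calc ∑ b' : {b' : Fin s // b' ≠ b}, (-(v b)⁻¹ * v b'.1) • M b'.1 j
          = ∑ b' ∈ Finset.univ.erase b, (-(v b)⁻¹ * v b') * M b' j := by
            rw [hsubt]; rfl
        _ = -(v b)⁻¹ * ∑ b' ∈ Finset.univ.erase b, v b' * M b' j := by
            rw [Finset.mul_sum]; exact Finset.sum_congr rfl (fun x _ => by ring)
        _ = M b j := by
            rw [hsum]; field_simp
    · rw [dif_neg h]
  have hγ : ∀ a : Fin s,
      Fintype.card (({b : Fin s // b ≠ a} → (Fin s → K)) × ({b : Fin s // b ≠ a} → K))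
        = q ^ (s * (s - 1) + (s - 1)) := by
    intro a
    have hcs : Fintype.card {b : Fin s // b ≠ a} = s - 1 := by
      simp [Fintype.card_subtype_compl, Fintype.card_subtype_eq]
    rw [Fintype.card_prod, Fintype.card_fun, Fintype.card_fun, Fintype.card_fun, hcs,
      Fintype.card_fin, pow_add, ← pow_mul, hq]
  calc ((Finset.univ : Finset (Matrix (Fin s) (Fin s) K)).filter fun M => M.det = 0).card
      ≤ (Finset.univ.biUnion fun a : Fin s => Finset.univ.image (Ψ a)).card :=
        Finset.card_le_card hsub
    _ ≤ ∑ a : Fin s, (Finset.univ.image (Ψ a)).card := Finset.card_biUnion_le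
    _ ≤ ∑ _a : Fin s, q ^ (s * (s - 1) + (s - 1)) := by
        refine Finset.sum_le_sum (fun a _ => ?_)
        calc (Finset.univ.image (Ψ a)).card ≤ (Finset.univ : Finset _).card :=
              Finset.card_image_le
          _ = q ^ (s * (s - 1) + (s - 1)) := by rw [Finset.card_univ, hγ a]
    _ = s * q ^ (s * (s - 1) + (s - 1)) := by simp [Finset.sum_const, mul_comm]

/-- With `W` a full-column-rank irreducible `(Σ_e n_e) × n_w` matrix over
`F_q` (column span contains no nonzero single-block-supported vector) and
`n_w ≤ Σ_e n_e − s`, `s = min_e n_e`, if `K = F_{q^n}` with `q^n > s·|E|`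
(i.e. `n > log_q(s|E|)`), then there exists an s×(Σ_e n_e) matrix `S` over `K` with
`S·W = 0` (entries of `W` viewed in `K`) such that every block `S_e` — the s×s
submatrix of the first `s` columns of block `e` — is invertible. -/
theorem exists_invertible_blocks_annihilator {F K E : Type*} [Field F] [Fintype F]
    [Field K] [Fintype K] [Algebra F K]
    [Fintype E] [Nonempty E] [DecidableEq E]
    {nw : ℕ} (n : E → ℕ) (hn : ∀ e, 0 < n e)
    (s : ℕ) (hs : s = Finset.univ.inf' Finset.univ_nonempty n)
    (hse : ∀ e, s ≤ n e)
    (W : Matrix ((e : E) × Fin (n e)) (Fin nw) F)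
    (hrank : LinearIndependent F W.transpose)
    (hnw : nw ≤ (∑ e : E, n e) - s)
    (hirr : ¬ ∃ (e : E) (v : ((e' : E) × Fin (n e')) → F),
        v ≠ 0 ∧ (∀ j : (e' : E) × Fin (n e'), j.1 ≠ e → v j = 0) ∧
        v ∈ Submodule.span F (Set.range W.transpose))
    (hcard : s * Fintype.card E < Fintype.card K) :
    ∃ S : Matrix (Fin s) ((e : E) × Fin (n e)) K,
      S * W.map (algebraMap F K) = 0 ∧
      ∀ e : E, IsUnit (Matrix.det (fun a b : Fin s => S a ⟨e, Fin.castLE (hse e) b⟩)) := by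
  classical
  obtain ⟨e₀, -, he₀⟩ := Finset.exists_mem_eq_inf' (Finset.univ_nonempty) n
  have hs1 : 1 ≤ s := by rw [hs, he₀]; exact hn e₀
  set W' : Matrix ((e : E) × Fin (n e)) (Fin nw) K := W.map (algebraMap F K) with hW'
  set Vk : Submodule K (((e : E) × Fin (n e)) → K) := LinearMap.ker W'.vecMulLinear with hVk
  -- Step A : surjectivity of the block projections on the left kernel
  have hsurj : ∀ e : E, Function.Surjective
      (fun (v : Vk) (b : Fin s) =>
        (v : ((e' : E) × Fin (n e')) → K) ⟨e, Fin.castLE (hse e) b⟩) := by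
    intro e
    set P : Vk →ₗ[K] (Fin s → K) :=
      { toFun := fun v b => (v : ((e' : E) × Fin (n e')) → K) ⟨e, Fin.castLE (hse e) b⟩
        map_add' := by intro v w; funext b; rfl
        map_smul' := by intro m v; funext b; rfl } with hP
    have hPs : Function.Surjective P := by
      rw [← LinearMap.range_eq_top]
      by_contra hne
      have hlt : LinearMap.range P < ⊤ := lt_of_le_of_ne le_top hne
      obtain ⟨f, hf0, hfbot⟩ := Submodule.exists_dual_map_eq_bot_of_lt_top hlt inferInstance
      set c : Fin s → K := fun b => f (fun j => if b = j then 1 else 0) with hc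
      have hfc : ∀ x : Fin s → K, f x = ∑ b, x b • c b := fun x => by
        rw [LinearMap.pi_apply_eq_sum_univ f x]
      have hcne : c ≠ 0 := by
        intro h0
        apply hf0
        refine LinearMap.ext fun x => ?_
        rw [hfc x, h0]
        simp
      have hann : ∀ v : Vk,
          ∑ b : Fin s, (v : ((e' : E) × Fin (n e')) → K) ⟨e, Fin.castLE (hse e) b⟩ * c b
            = 0 := by
        intro v
        have hmem : f (P v) ∈ Submodule.map f (LinearMap.range P) :=
          Submodule.mem_map_of_mem ⟨v, rfl⟩
        rw [hfbot, Submodule.mem_bot] at hmem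
        rw [hfc (P v)] at hmem
        calc ∑ b : Fin s, (v : ((e' : E) × Fin (n e')) → K) ⟨e, Fin.castLE (hse e) b⟩ * c b
            = ∑ b : Fin s, (P v) b • c b := by
              refine Finset.sum_congr rfl fun b _ => ?_
              rw [smul_eq_mul]
              rfl
          _ = 0 := hmem
      -- Build the single-block vector `u`
      set u : ((e' : E) × Fin (n e')) → K :=
        ∑ b : Fin s, Pi.single (⟨e, Fin.castLE (hse e) b⟩ : (e' : E) × Fin (n e')) (c b)
        with hu
      have hidx : ∀ b1 b2 : Fin s,
          (⟨e, Fin.castLE (hse e) b1⟩ : (e' : E) × Fin (n e'))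
            = ⟨e, Fin.castLE (hse e) b2⟩ → b1 = b2 := by
        intro b1 b2 h
        have h2 := (Sigma.mk.inj_iff.mp h).2
        exact Fin.castLE_injective (hse e) (eq_of_heq h2)
      have hu_app : ∀ b0 : Fin s,
          u ⟨e, Fin.castLE (hse e) b0⟩ = c b0 := by
        intro b0
        rw [hu, Finset.sum_apply]
        rw [Finset.sum_eq_single b0]
        · simp
        · intro b _ hbne
          exact Pi.single_eq_of_ne (fun hh => hbne (hidx b0 b hh).symm) _
        · intro h; exact absurd (Finset.mem_univ b0) h
      have hu_off : ∀ j : (e' : E) × Fin (n e'), j.1 ≠ e → u j = 0 := by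
        intro j hj
        rw [hu, Finset.sum_apply]
        refine Finset.sum_eq_zero fun b _ => ?_
        exact Pi.single_eq_of_ne (fun hh => hj (by rw [hh])) _
      have hu_orth : ∀ v : Vk,
          ∑ i, u i * (v : ((e' : E) × Fin (n e')) → K) i = 0 := by
        intro v
        rw [hu]
        simp only [Finset.sum_apply, Finset.sum_mul]
        rw [Finset.sum_comm]
        rw [← hann v]
        refine Finset.sum_congr rfl fun b _ => ?_
        rw [Finset.sum_eq_single (⟨e, Fin.castLE (hse e) b⟩ : (e' : E) × Fin (n e'))]
        · rw [Pi.single_eq_same]; exact mul_comm _ _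
        · intro i _ hine; rw [Pi.single_eq_of_ne hine, zero_mul]
        · intro h; exact absurd (Finset.mem_univ _) h
      have hu_mem : u ∈ LinearMap.range W'.mulVecLin := by
        by_contra hnm
        obtain ⟨g, hg0, hgbot⟩ := Submodule.exists_dual_map_eq_bot_of_notMem hnm inferInstance
        set w : ((e' : E) × Fin (n e')) → K := fun i => g (fun j => if i = j then 1 else 0)
          with hw
        have hgw : ∀ z : ((e' : E) × Fin (n e')) → K, g z = ∑ i, z i * w i := by
          intro z
          rw [LinearMap.pi_apply_eq_sum_univ g z]
          exact Finset.sum_congr rfl fun i _ => rfl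
        have hwV : w ∈ Vk := by
          rw [hVk, LinearMap.mem_ker]
          funext j
          have hcolj : W'.mulVecLin (Pi.single j 1) = fun i => W' i j := by
            funext i
            simp [Matrix.mulVecLin_apply]
          have hcol : (fun i => W' i j) ∈ LinearMap.range W'.mulVecLin :=
            ⟨Pi.single j 1, hcolj⟩
          have hg0col : g (fun i => W' i j) = 0 := by
            have := Submodule.mem_map_of_mem (f := g) hcol
            rwa [hgbot, Submodule.mem_bot] at this
          rw [hgw] at hg0col
          show (w ᵥ* W') j = (0 : Fin nw → K) j
          rw [Matrix.vecMul, dotProduct, Pi.zero_apply]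
          rw [← hg0col]
          exact Finset.sum_congr rfl fun i _ => by ring
        have : g u = 0 := by rw [hgw]; exact hu_orth ⟨w, hwV⟩
        exact hg0 this
      obtain ⟨xcoef, hx⟩ := hu_mem
      set bK := Module.Basis.ofVectorSpace F K with hbK
      obtain ⟨b0, hb0'⟩ := Function.ne_iff.mp hcne
      have hb0 : c b0 ≠ 0 := by simpa using hb0'
      have hub0 : u ⟨e, Fin.castLE (hse e) b0⟩ ≠ 0 := by rw [hu_app b0]; exact hb0
      have hrepr : bK.repr (u ⟨e, Fin.castLE (hse e) b0⟩) ≠ 0 := by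
        intro h
        exact hub0 ((LinearEquiv.map_eq_zero_iff bK.repr).mp h)
      obtain ⟨t, ht'⟩ := Finsupp.ne_iff.mp hrepr
      have ht : bK.repr (u ⟨e, Fin.castLE (hse e) b0⟩) t ≠ 0 := by simpa using ht'
      set vF : ((e' : E) × Fin (n e')) → F := fun i => bK.repr (u i) t with hvFdef
      set xF : Fin nw → F := fun j => bK.repr (xcoef j) t with hxFdef
      have hui : ∀ i, u i = ∑ j, W i j • xcoef j := by
        intro i
        rw [← hx]
        show W'.mulVec xcoef i = _
        rw [Matrix.mulVec, dotProduct]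
        refine Finset.sum_congr rfl fun j _ => ?_
        rw [hW', Matrix.map_apply, Algebra.smul_def]
      have hvF : ∀ i, vF i = ∑ j, xF j * W i j := by
        intro i
        rw [hvFdef]
        show bK.repr (u i) t = _
        rw [hui i, map_sum, Finsupp.finset_sum_apply]
        refine Finset.sum_congr rfl fun j _ => ?_
        rw [_root_.map_smul, Finsupp.smul_apply, smul_eq_mul, mul_comm]
      refine absurd ?_ hirr
      refine ⟨e, vF, ?_, ?_, ?_⟩
      · intro h0
        apply ht
        have := congrFun h0 (⟨e, Fin.castLE (hse e) b0⟩ : (e' : E) × Fin (n e'))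
        simpa [hvFdef] using this
      · intro j hj
        rw [hvFdef]
        show bK.repr (u j) t = 0
        rw [hu_off j hj]
        simp
      · refine (Submodule.mem_span_range_iff_exists_fun F (v := fun i => Wᵀ i)).mpr ?_
        refine ⟨xF, funext fun i => ?_⟩
        rw [Finset.sum_apply]
        rw [hvF i]
        refine Finset.sum_congr rfl fun j _ => ?_
        rw [Pi.smul_apply, Matrix.transpose_apply, smul_eq_mul]
    exact hPs
  -- Step B : counting
  haveI : Fintype Vk := Fintype.ofFinite _
  set fe : E → (Fin s → Vk) → Matrix (Fin s) (Fin s) K := fun e x =>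
    Matrix.of fun a b => (x a : ((e' : E) × Fin (n e')) → K) ⟨e, Fin.castLE (hse e) b⟩
    with hfe
  have hfe_add : ∀ e x y, fe e (x + y) = fe e x + fe e y := by
    intro e x y
    ext a b
    simp [hfe]
  have hfe_surj : ∀ e, Function.Surjective (fe e) := by
    intro e M
    choose xr hxr using fun a => hsurj e (M a)
    refine ⟨fun a => xr a, ?_⟩
    ext a b
    exact congrFun (hxr a) b
  set D : Finset (Matrix (Fin s) (Fin s) K) := Finset.univ.filter fun M => M.det = 0 with hD
  have hcount : ∀ e, (Finset.univ.filter fun x : Fin s → Vk => (fe e x).det = 0).card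
      * Fintype.card (Matrix (Fin s) (Fin s) K)
      = D.card * Fintype.card (Fin s → Vk) := by
    intro e
    have h := aux_card_filter_mem (AddMonoidHom.mk' (fe e) (hfe_add e)) (hfe_surj e) D
    rw [← h]
    congr 1
    congr 1
    refine Finset.filter_congr fun x _ => ?_
    show (fe e x).det = 0 ↔ (AddMonoidHom.mk' (fe e) (hfe_add e)) x ∈ D
    rw [show (AddMonoidHom.mk' (fe e) (hfe_add e)) x = fe e x from rfl, hD,
      Finset.mem_filter]
    simp
  have hcardM : Fintype.card (Matrix (Fin s) (Fin s) K) = Fintype.card K ^ (s * s) := by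
    rw [show Fintype.card (Matrix (Fin s) (Fin s) K) = Fintype.card (Fin s → Fin s → K) from
      rfl]
    rw [Fintype.card_fun, Fintype.card_fun, Fintype.card_fin, ← pow_mul]
  set Bad : Finset (Fin s → Vk) := Finset.univ.filter fun x => ∃ e : E, (fe e x).det = 0
    with hBad
  have hBles : Bad.card ≤ ∑ e : E,
      (Finset.univ.filter fun x : Fin s → Vk => (fe e x).det = 0).card := by
    calc Bad.card ≤ (Finset.univ.biUnion fun e : E =>
          Finset.univ.filter fun x : Fin s → Vk => (fe e x).det = 0).card := by
          refine Finset.card_le_card ?_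
          intro x hx
          rw [hBad, Finset.mem_filter] at hx
          obtain ⟨-, e, he⟩ := hx
          exact Finset.mem_biUnion.mpr ⟨e, Finset.mem_univ e,
            Finset.mem_filter.mpr ⟨Finset.mem_univ x, he⟩⟩
      _ ≤ _ := Finset.card_biUnion_le
  have hexp : s * (s - 1) + (s - 1) + 1 = s * s := by
    obtain ⟨k, rfl⟩ : ∃ k, s = k + 1 := ⟨s - 1, by omega⟩
    simp only [Nat.add_sub_cancel]
    ring
  have hApos : 0 < Fintype.card (Fin s → Vk) := Fintype.card_pos
  have hfinal : Bad.card < Fintype.card (Fin s → Vk) := by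
    refine Nat.lt_of_mul_lt_mul_right
      (a := Fintype.card (Matrix (Fin s) (Fin s) K)) ?_
    calc Bad.card * Fintype.card (Matrix (Fin s) (Fin s) K)
        ≤ (∑ e : E, (Finset.univ.filter
              fun x : Fin s → Vk => (fe e x).det = 0).card)
            * Fintype.card (Matrix (Fin s) (Fin s) K) :=
          Nat.mul_le_mul_right _ hBles
      _ = ∑ e : E, (Finset.univ.filter
              fun x : Fin s → Vk => (fe e x).det = 0).card
            * Fintype.card (Matrix (Fin s) (Fin s) K) := Finset.sum_mul _ _ _
      _ = ∑ _e : E, D.card * Fintype.card (Fin s → Vk) := by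
          exact Finset.sum_congr rfl fun e _ => hcount e
      _ = Fintype.card E * (D.card * Fintype.card (Fin s → Vk)) := by
          rw [Finset.sum_const, Finset.card_univ, smul_eq_mul]
      _ ≤ Fintype.card E * ((s * Fintype.card K ^ (s * (s - 1) + (s - 1)))
            * Fintype.card (Fin s → Vk)) := by
          refine Nat.mul_le_mul_left _ (Nat.mul_le_mul_right _ ?_)
          exact aux_card_det_zero K s
      _ < Fintype.card (Fin s → Vk) * Fintype.card (Matrix (Fin s) (Fin s) K) := by
          rw [hcardM, ← hexp]
          have h1 : Fintype.card E * (s * Fintype.card K ^ (s * (s - 1) + (s - 1))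
              * Fintype.card (Fin s → Vk))
              = (s * Fintype.card E)
                * (Fintype.card K ^ (s * (s - 1) + (s - 1))
                  * Fintype.card (Fin s → Vk)) := by ring
          have h2 : Fintype.card (Fin s → Vk)
              * Fintype.card K ^ (s * (s - 1) + (s - 1) + 1)
              = Fintype.card K
                * (Fintype.card K ^ (s * (s - 1) + (s - 1))
                  * Fintype.card (Fin s → Vk)) := by ring
          rw [h1, h2]
          have hpos : 0 < Fintype.card K ^ (s * (s - 1) + (s - 1))
              * Fintype.card (Fin s → Vk) := by positivity
          exact Nat.mul_lt_mul_of_lt_of_le hcard le_rfl hpos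
  have hgood : ∃ x : Fin s → Vk, ∀ e : E, (fe e x).det ≠ 0 := by
    by_contra h
    push_neg at h
    have : Bad = Finset.univ := by
      refine Finset.eq_univ_of_forall fun x => ?_
      rw [hBad, Finset.mem_filter]
      obtain ⟨e, he⟩ := h x
      exact ⟨Finset.mem_univ x, e, he⟩
    rw [this, Finset.card_univ] at hfinal
    exact lt_irrefl _ hfinal
  obtain ⟨x, hxgood⟩ := hgood
  refine ⟨Matrix.of fun a i => (x a : ((e' : E) × Fin (n e')) → K) i, ?_, ?_⟩
  · ext a j
    have hker : (x a : ((e' : E) × Fin (n e')) → K) ᵥ* W' = 0 := by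
      have h2 : W'.vecMulLinear ((x a : ((e' : E) × Fin (n e')) → K)) = 0 :=
        LinearMap.mem_ker.mp (x a).2
      rw [Matrix.vecMulLinear_apply] at h2
      exact h2
    have := congrFun hker j
    rw [Matrix.vecMul, dotProduct] at this
    rw [Matrix.mul_apply]
    simpa using this
  · intro e
    exact isUnit_iff_ne_zero.mpr (hxgood e)
end

section
/- Tree-PIN alignment construction: Let T be a tree with root leaf ρ, edges E, and for each non-root-incident edge e let e^# be the adjacent edge on the unique path from e toward ρ, and i*(e) the endpoint of e closer to ρ. Given invertible s×s matrices (A_{i,e}) for internal nodes i and edges e ∈ E_i \ {e*(i)}, define S_{e(ρ)} = S_1 (any invertible matrix) for the root edge and S_e = −S_{e^#} A_{i*(e),e}^{−1} recursively. Then the row-block vector S = (S_e)_{e∈E} satisfies S·F = 0, where F is the tree communication matrix whose column blocks, one per internal node i and edge e ∈ E_i \ {e*(i)}, have identity in row-block e*(i), A_{i,e} in row-block e, and zeros elsewhere; moreover each S_e is invertible. -/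
/-- Tree-PIN alignment construction. Edges are indexed by `E` with root
edge `e₀` (the edge at the root leaf ρ); `par e` is the adjacent edge `e^#` on the
unique path from `e` toward ρ (with `par e₀ = e₀`), and iterating `par` from any edge
reaches `e₀` (tree property). Given invertible matrices `A_e` (the communication
coefficients `A_{i*(e),e}`), an invertible `S₁`, and `S` defined by `S e₀ = S₁` and
`S e = −S_{e^#} · A_e⁻¹` for `e ≠ e₀`, the row-block vector `S` satisfies `S·F = 0`
for the tree communication matrix `F` (column block of a non-root edge `e` carrying
the identity at row-block `e^#` and `A_e` at row-block `e`), and every `S_e` is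
invertible. -/
theorem tree_pin_alignment {F : Type*} [Field F] {s : ℕ} {E : Type*}
    [Fintype E] [DecidableEq E]
    (e₀ : E) (par : E → E) (hpar0 : par e₀ = e₀)
    (htree : ∀ e : E, ∃ k : ℕ, par^[k] e = e₀)
    (A : E → Matrix (Fin s) (Fin s) F) (hA : ∀ e, IsUnit (A e))
    (S1 : Matrix (Fin s) (Fin s) F) (hS1 : IsUnit S1)
    (S : E → Matrix (Fin s) (Fin s) F)
    (hS0 : S e₀ = S1)
    (hSrec : ∀ e : E, e ≠ e₀ → S e = -(S (par e) * (A e)⁻¹))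
    (Fm : Matrix (E × Fin s) ({e : E // e ≠ e₀} × Fin s) F)
    (hFm : ∀ (f : E) (a : Fin s) (e : {e : E // e ≠ e₀}) (b : Fin s),
      Fm (f, a) (e, b) =
        if f = par e.1 then (if a = b then 1 else 0)
        else if f = e.1 then A e.1 a b else 0)
    (Sm : Matrix (Fin s) (E × Fin s) F)
    (hSm : ∀ (a : Fin s) (e : E) (b : Fin s), Sm a (e, b) = S e a b) :
    (∀ e : E, IsUnit (S e)) ∧ Sm * Fm = 0 := by
  have hAd : ∀ e, IsUnit (A e).det := fun e => (Matrix.isUnit_iff_isUnit_det _).mp (hA e)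
  have hSunit : ∀ e : E, IsUnit (S e) := by
    have key : ∀ k : ℕ, ∀ e : E, par^[k] e = e₀ → IsUnit (S e) := by
      intro k
      induction k with
      | zero => intro e he; simp at he; rw [he, hS0]; exact hS1
      | succ n ih =>
        intro e he
        by_cases h0 : e = e₀
        · rw [h0, hS0]; exact hS1
        · rw [hSrec e h0]
          have hp : par^[n] (par e) = e₀ := by
            rw [← Function.iterate_succ_apply]; exact he
          exact (((ih (par e) hp).mul ((Matrix.isUnit_nonsing_inv_iff).mpr (hA e)))).neg
    intro e
    obtain ⟨k, hk⟩ := htree e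
    exact key k e hk
  have hparne : ∀ e : E, e ≠ e₀ → par e ≠ e := by
    intro e he hpe
    obtain ⟨k, hk⟩ := htree e
    have : ∀ m, par^[m] e = e := by
      intro m; induction m with
      | zero => rfl
      | succ n ih => rw [Function.iterate_succ_apply', ih, hpe]
    exact he ((this k) ▸ hk)
  refine ⟨hSunit, ?_⟩
  ext a ⟨⟨e, he⟩, b⟩
  simp only [Matrix.mul_apply, Matrix.zero_apply]
  rw [Fintype.sum_prod_type]
  have hne : par e ≠ e := hparne e he
  have hterm : ∀ f : E, (∑ c : Fin s, Sm a (f, c) * Fm (f, c) (⟨e, he⟩, b)) =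
      (if f = par e then S (par e) a b else 0) +
      (if f = e then (S e * A e) a b else 0) := by
    intro f
    by_cases h1 : f = par e
    · subst h1
      simp only [hSm, hFm, if_pos rfl, if_neg hne]
      simp [mul_ite]
    · rw [if_neg h1, zero_add]
      by_cases h2 : f = e
      · subst h2
        simp [hSm, hFm, h1, Matrix.mul_apply]
      · simp [hSm, hFm, h1, h2]
  rw [Finset.sum_congr rfl (fun f _ => hterm f), Finset.sum_add_distrib,
    Finset.sum_ite_eq' Finset.univ (par e), Finset.sum_ite_eq' Finset.univ e]
  simp only [Finset.mem_univ, if_pos]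
  rw [hSrec e he, Matrix.neg_mul, Matrix.mul_assoc, Matrix.nonsing_inv_mul _ (hAd e),
    Matrix.mul_one]
  simp
end
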